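/- Let q_k(x) = √((d−1)/d)·U_k(x) − (1/√(d(d−1)))·U_{k−2}(x) where U_k is the Chebyshev polynomial of the second kind, and let f(k, x) = q_k(x)/√(d(d−1)^{k−1}). Then the function g on the d-regular tree defined by g(v) = f(|v|, λ/(2√(d−1))), where |v| is the distance from v to the root, satisfies the eigenvector equation Σ_{w∼v} g(w) = λ·g(v) at every vertex v, for λ ∈ [−2√(d−1), 2√(d−1)]. -/

import Mathlib

open Polynomial

/-- The spherical function `g(v) = f(|v|, λ/(2√(d−1)))` built from Chebyshev polynomials of
the second kind satisfies the eigenvector equation `Σ_{w∼v} g(w) = λ g(v)` on the `d`-regular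
tree: at the root the `d` neighbours are at distance `1`, and a vertex at distance `k ≥ 1`
has one neighbour at distance `k−1` and `d−1` at distance `k+1`. -/
theorem spherical_function_eigenvector
    (d : ℕ) (hd : 3 ≤ d) (lam : ℝ)
    (hlam : |lam| ≤ 2 * Real.sqrt ((d : ℝ) - 1))
    (q : ℕ → ℝ → ℝ)
    (hq : ∀ (k : ℕ) (x : ℝ), q k x
      = Real.sqrt (((d : ℝ) - 1) / d) * (Chebyshev.U ℝ (k : ℤ)).eval x
        - (1 / Real.sqrt ((d : ℝ) * ((d : ℝ) - 1))) * (Chebyshev.U ℝ ((k : ℤ) - 2)).eval x)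
    (f : ℕ → ℝ → ℝ)
    (hf : ∀ (k : ℕ) (x : ℝ), f k x = q k x / Real.sqrt ((d : ℝ) * ((d : ℝ) - 1) ^ ((k : ℤ) - 1)))
    (x : ℝ) (hx : x = lam / (2 * Real.sqrt ((d : ℝ) - 1))) :
    (d : ℝ) * f 1 x = lam * f 0 x ∧
      ∀ k : ℕ, 1 ≤ k → f (k - 1) x + ((d : ℝ) - 1) * f (k + 1) x = lam * f k x := by
  have hd3 : (3:ℝ) ≤ (d:ℝ) := by exact_mod_cast hd
  have hd0 : (0:ℝ) < (d:ℝ) - 1 := by linarith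
  have hdd : (0:ℝ) < (d:ℝ) := by linarith
  set s := Real.sqrt ((d:ℝ) - 1) with hs_def
  set t := Real.sqrt (d:ℝ) with ht_def
  have hs0 : 0 < s := Real.sqrt_pos.mpr hd0
  have ht0 : 0 < t := Real.sqrt_pos.mpr hdd
  have hs2 : s ^ 2 = (d:ℝ) - 1 := Real.sq_sqrt hd0.le
  have ht2 : t ^ 2 = (d:ℝ) := Real.sq_sqrt hdd.le
  have hlam' : lam = 2 * s * x := by rw [hx]; field_simp
  have hq' : Real.sqrt (((d:ℝ) - 1) / d) = s / t := Real.sqrt_div hd0.le _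
  have hm' : Real.sqrt ((d:ℝ) * ((d:ℝ) - 1)) = t * s := Real.sqrt_mul hdd.le _
  have hpow : ∀ m : ℤ, Real.sqrt ((d:ℝ) * ((d:ℝ) - 1) ^ m) = t * s ^ m := by
    intro m
    rw [Real.sqrt_mul hdd.le]
    congr 1
    have h1 : ((d:ℝ) - 1) ^ m = (s ^ m) ^ 2 := by
      rw [← hs2, ← zpow_natCast (s ^ m) 2, ← zpow_natCast s 2, ← zpow_mul, ← zpow_mul, mul_comm]
    rw [h1, Real.sqrt_sq (zpow_nonneg hs0.le m)]
  have hsne : s ≠ 0 := hs0.ne'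
  have htne : t ≠ 0 := ht0.ne'
  constructor
  · rw [hf, hf, hq, hq, hq', hm', hpow, hpow]
    norm_num [Polynomial.Chebyshev.U_zero, Polynomial.Chebyshev.U_one,
      Polynomial.Chebyshev.U_neg_one, Polynomial.Chebyshev.U_neg_two]
    rw [hlam']
    field_simp
    linear_combination (-x) * hs2
  · intro k hk
    obtain ⟨j, rfl⟩ : ∃ j, k = j + 1 := ⟨k - 1, (Nat.succ_pred_eq_of_pos hk).symm⟩
    simp only [Nat.add_sub_cancel]
    have c1 : ((j+1:ℕ):ℤ) = (j:ℤ) + 1 := by push_cast; ring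
    have c2 : ((j+2:ℕ):ℤ) = (j:ℤ) + 2 := by push_cast; ring
    have e1 := congrArg (Polynomial.eval x) (Polynomial.Chebyshev.U_add_two ℝ (j:ℤ))
    have e2 := congrArg (Polynomial.eval x) (Polynomial.Chebyshev.U_add_two ℝ ((j:ℤ) - 2))
    simp only [eval_sub, eval_mul, eval_ofNat, eval_X] at e1 e2
    rw [show ((j:ℤ)-2)+2 = (j:ℤ) from by ring, show ((j:ℤ)-2)+1 = (j:ℤ)-1 from by ring] at e2
    rw [hf, hf, hf, hq, hq, hq, hq', hm', hpow, hpow, hpow, c1, c2]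
    rw [show (j:ℤ)+1-2 = (j:ℤ)-1 from by ring, show (j:ℤ)+2-2 = (j:ℤ) from by ring,
        show (j:ℤ)+1-1 = (j:ℤ) from by ring, show (j:ℤ)+2-1 = (j:ℤ)+1 from by ring]
    rw [hlam', e1, e2]
    rw [zpow_sub_one₀ hsne, zpow_add_one₀ hsne, ← hs2]
    have hPne : s ^ (j:ℤ) ≠ 0 := zpow_ne_zero _ hsne
    field_simp
    ring
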